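/- Let D be the discriminant of a real quadratic field, let 0 < ε ≤ 1/2, and suppose there exists an odd prime p with D a quadratic residue modulo p (i.e. the Legendre symbol (D/p) = 1) and (1/2)√D ≤ p ≤ (1/2 + ε)√D. Then the real quadratic field ℚ(√D) has a generator α with H(α) ≤ (1/2 + ε)√D. -/

import Mathlib

lemma exists_bc (D : ℤ) (p : ℕ) (hp : p.Prime) (hodd : Odd p) (t : ℤ) (ht : (4:ℤ) ∣ D - t^2)
    (x : ZMod p) (hx : x * x = (D : ZMod p)) (hpD : ¬ ((p:ℤ) ∣ D)) (hD0 : 0 ≤ D) (hD4 : D ≤ 4*(p:ℤ)^2) :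
    ∃ b c : ℤ, b^2 - 4*p*c = D ∧ |b| ≤ p ∧ |c| ≤ p ∧ Int.gcd (Int.gcd p b) c = 1 := by
  haveI : Fact p.Prime := ⟨hp⟩
  have hppos : (0:ℤ) < p := by exact_mod_cast hp.pos
  set b₁ : ℤ := (x.val : ℤ) with hb₁def
  have hb₁ : (p:ℤ) ∣ b₁^2 - D := by
    have h0 : ((b₁^2 - D : ℤ) : ZMod p) = 0 := by
      push_cast
      rw [hb₁def]
      push_cast
      rw [ZMod.natCast_val, ZMod.cast_id]
      rw [← hx]; ring
    exact (ZMod.intCast_zmod_eq_zero_iff_dvd _ p).mp h0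
  -- parity adjustment
  set u : ℤ := if (2:ℤ) ∣ (b₁ - t) then b₁ else b₁ + p with hu
  have hu2 : (2:ℤ) ∣ (u - t) := by
    by_cases h : (2:ℤ) ∣ (b₁ - t)
    · simp [hu, h]
    · simp only [hu, if_neg h]
      obtain ⟨k, hk⟩ := hodd
      omega
  have hup : (p:ℤ) ∣ u - b₁ := by
    by_cases h : (2:ℤ) ∣ (b₁ - t) <;> simp [hu, h]
  -- reduce mod 2p
  set r : ℤ := u % (2*p) with hr
  have hr0 : 0 ≤ r := Int.emod_nonneg _ (by positivity)
  have hr1 : r < 2*p := Int.emod_lt_of_pos _ (by positivity)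
  have hru : (2*(p:ℤ)) ∣ u - r := by rw [hr]; exact Int.ModEq.dvd (Int.mod_modEq u _)
  set b : ℤ := if r ≤ p then r else r - 2*p with hb
  have hbu : (2*(p:ℤ)) ∣ u - b := by
    by_cases h : r ≤ (p:ℤ)
    · simpa [hb, h] using hru
    · rw [hb, if_neg h]
      have heq2 : u - (r - 2*p) = (u - r) + 2*p := by ring
      rw [heq2]
      exact dvd_add hru ⟨1, by ring⟩
  have habs : |b| ≤ p := by
    rw [abs_le]
    by_cases h : r ≤ (p:ℤ)
    · rw [hb, if_pos h]; omega
    · rw [hb, if_neg h]; omega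
  -- b ≡ u mod 2 and mod p
  have hb2 : (2:ℤ) ∣ b - t := by
    obtain ⟨k, hk⟩ := hbu
    obtain ⟨l, hl⟩ := hu2
    exact ⟨l - p*k, by linarith⟩
  have hbp : (p:ℤ) ∣ b^2 - D := by
    have h1 : (p:ℤ) ∣ b - b₁ := by
      obtain ⟨k, hk⟩ := hbu
      obtain ⟨l, hl⟩ := hup
      exact ⟨l - 2*k, by linarith⟩
    obtain ⟨k, hk⟩ := h1
    obtain ⟨l, hl⟩ := hb₁
    refine ⟨k*(b + b₁) + l, ?_⟩
    have heq2 : b^2 - D = (b - b₁)*(b + b₁) + (b₁^2 - D) := by ring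
    rw [heq2, hk, hl]; ring
  have hb4 : (4:ℤ) ∣ b^2 - D := by
    obtain ⟨k, hk⟩ := hb2
    obtain ⟨l, hl⟩ := ht
    refine ⟨k*t + k^2 - l, ?_⟩
    have hb' : b = t + 2*k := by linarith
    rw [hb']; linarith [hl]
  have hcop : IsCoprime (4:ℤ) (p:ℤ) := by
    have h2 : IsCoprime (2:ℤ) (p:ℤ) := by
      rw [Int.isCoprime_iff_gcd_eq_one]
      rw [show ((2:ℤ) = ((2:ℕ):ℤ)) by norm_num, Int.gcd_natCast_natCast]
      exact (Nat.prime_two.coprime_iff_not_dvd).mpr (by obtain ⟨k, hk⟩ := hodd; omega)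
    have h4 : IsCoprime ((2:ℤ)^2) ((p:ℕ):ℤ) := h2.pow_left
    norm_num at h4
    exact h4
  have hdvd : (4*(p:ℤ)) ∣ b^2 - D := hcop.mul_dvd hb4 hbp
  obtain ⟨c, hc⟩ := hdvd
  have heq : b^2 - 4*p*c = D := by linarith
  have hbsq : b^2 ≤ (p:ℤ)^2 := by
    have := abs_le.mp habs
    nlinarith
  have hcabs : |c| ≤ p := by
    rw [abs_le]
    constructor
    · nlinarith [sq_nonneg b, hppos, hD4]
    · nlinarith [hppos, hbsq, hD0]
  have hpb : ¬ ((p:ℤ) ∣ b) := by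
    intro hdb
    apply hpD
    obtain ⟨m, hm⟩ := hdb
    have h2 : (p:ℤ) ∣ b^2 := ⟨p*m^2, by rw [hm]; ring⟩
    simpa using dvd_sub h2 hbp
  have hgcd : Int.gcd (p:ℤ) b = 1 := by
    have hnd : ¬ (p ∣ b.natAbs) := by
      intro hh
      apply hpb
      have := Int.natAbs_dvd_natAbs.mpr (Int.natCast_dvd_natCast.mpr hh)
      simpa using (Int.natCast_dvd_natCast.mpr hh : ((p:ℤ)) ∣ (b.natAbs:ℤ)).trans
        (Int.natAbs_dvd.mpr dvd_rfl)
    have := (Nat.Prime.coprime_iff_not_dvd hp).mpr hnd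
    simpa [Int.gcd] using this
  refine ⟨b, c, heq, habs, hcabs, ?_⟩
  rw [hgcd]
  simp [Int.gcd]



open NumberField Module in
lemma exists_basis_one (K : Type*) [Field K] [NumberField K] (hdeg : Module.finrank ℚ K = 2) :
    ∃ b : Basis (Fin 2) ℤ (𝓞 K), b 0 = 1 := by
  have hrk : Module.finrank ℤ (𝓞 K) = 2 := (RingOfIntegers.rank K).trans hdeg
  have hcard : Fintype.card (Module.Free.ChooseBasisIndex ℤ (𝓞 K)) = 2 := by
    rw [← Module.finrank_eq_card_chooseBasisIndex, hrk]
  let e : Basis (Fin 2) ℤ (𝓞 K) :=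
    (RingOfIntegers.basis K).reindex (Fintype.equivFinOfCardEq hcard)
  set a0 : ℤ := e.repr 1 0 with ha0
  set a1 : ℤ := e.repr 1 1 with ha1
  have hone : a0 • e 0 + a1 • e 1 = 1 := by
    have := e.sum_repr 1
    rwa [Fin.sum_univ_two] at this
  -- gcd of coordinates is 1 by a norm argument
  have hg : Int.gcd a0 a1 = 1 := by
    obtain ⟨a0', h0'⟩ := (Int.gcd_dvd_left a0 a1 : ((Int.gcd a0 a1 : ℕ):ℤ) ∣ a0)
    obtain ⟨a1', h1'⟩ := (Int.gcd_dvd_right a0 a1 : ((Int.gcd a0 a1 : ℕ):ℤ) ∣ a1)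
    set y : 𝓞 K := a0' • e 0 + a1' • e 1 with hy
    have hx : (algebraMap ℤ (𝓞 K) ((Int.gcd a0 a1 : ℕ):ℤ)) * y = 1 := by
      rw [← Algebra.smul_def, hy, smul_add, smul_smul, smul_smul, ← h0', ← h1', hone]
    have hnorm : Algebra.norm ℤ (algebraMap ℤ (𝓞 K) ((Int.gcd a0 a1 : ℕ):ℤ))
        * Algebra.norm ℤ y = 1 := by
      rw [← map_mul, hx, map_one]
    rw [Algebra.norm_algebraMap_of_basis e, Fintype.card_fin] at hnorm
    have hdvd1 : ((Int.gcd a0 a1 : ℕ):ℤ) ∣ ((1:ℕ):ℤ) := by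
      push_cast
      exact ⟨((Int.gcd a0 a1 : ℕ):ℤ) * Algebra.norm ℤ y, by rw [← hnorm]; ring⟩
    exact Nat.dvd_one.mp (Int.natCast_dvd_natCast.mp hdvd1)
  -- Bezout
  have hbez := Int.gcd_eq_gcd_ab a0 a1
  rw [hg] at hbez
  set A : Matrix (Fin 2) (Fin 2) ℤ := !![a0, -(Int.gcdB a0 a1); a1, Int.gcdA a0 a1] with hA
  have hdet : A.det = 1 := by
    rw [hA, Matrix.det_fin_two_of]
    push_cast at hbez
    linarith
  let equiv := A.toLinearEquiv e (by rw [hdet]; exact isUnit_one)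
  refine ⟨e.map equiv, ?_⟩
  rw [Basis.map_apply]
  have : equiv (e 0) = Matrix.toLin e e A (e 0) := rfl
  rw [this, Matrix.toLin_self]
  rw [Fin.sum_univ_two]
  simpa [hA] using hone




open NumberField Module in
lemma quadratic_discr_sqrt (K : Type*) [Field K] [NumberField K]
    (hdeg : Module.finrank ℚ K = 2) :
    ∃ (s : K) (t : ℤ), s ^ 2 = (NumberField.discr K : K) ∧
      s ∉ (⊥ : IntermediateField ℚ K) ∧ (4:ℤ) ∣ (NumberField.discr K - t^2) := by
  obtain ⟨b, hb0⟩ := exists_basis_one K hdeg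
  have hrk : Module.finrank ℤ (𝓞 K) = 2 := (RingOfIntegers.rank K).trans hdeg
  set ω : 𝓞 K := b 1 with hω
  set c0 : ℤ := b.repr (ω*ω) 0 with hc0
  set c1 : ℤ := b.repr (ω*ω) 1 with hc1
  have hω2 : ω*ω = c0 • (1 : 𝓞 K) + c1 • ω := by
    have := b.sum_repr (ω*ω)
    rw [Fin.sum_univ_two, hb0] at this
    exact this.symm
  have htr1 : Algebra.trace ℤ (𝓞 K) 1 = 2 := by
    have h := Algebra.trace_algebraMap (R := ℤ) (S := 𝓞 K) 1
    rw [map_one] at h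
    rw [h, hrk]
    simp
  have htrω : Algebra.trace ℤ (𝓞 K) ω = c1 := by
    rw [Algebra.trace_eq_matrix_trace b, Matrix.trace_fin_two]
    rw [Algebra.leftMulMatrix_eq_repr_mul, Algebra.leftMulMatrix_eq_repr_mul]
    rw [hb0, mul_one]
    have : b.repr ω 0 = 0 := by
      rw [hω, b.repr_self]
      simp
    rw [this, ← hω, zero_add, ← hc1]
  have htrω2 : Algebra.trace ℤ (𝓞 K) (ω*ω) = 2*c0 + c1*c1 := by
    rw [hω2, map_add, map_zsmul, map_zsmul, htr1, htrω, smul_eq_mul, smul_eq_mul]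
    ring
  have hD : NumberField.discr K = 4*c0 + c1^2 := by
    rw [← NumberField.discr_eq_discr K b, Algebra.discr_def, Matrix.det_fin_two]
    simp only [Algebra.traceMatrix_apply, Algebra.traceForm_apply]
    rw [hb0, one_mul, mul_one, one_mul, htr1, htrω, htrω2]
    ring
  set w : 𝓞 K := 2*ω - (c1 : 𝓞 K) with hwdef
  have hω2' : ω^2 = (c0 : 𝓞 K) + (c1 : 𝓞 K) * ω := by
    rw [pow_two, hω2, zsmul_eq_mul, zsmul_eq_mul, mul_one]
  have hw : w^2 = ((4*c0 + c1^2 : ℤ) : 𝓞 K) := by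
    rw [hwdef]
    push_cast
    linear_combination (4 : 𝓞 K) * hω2'
  refine ⟨algebraMap (𝓞 K) K w, c1, ?_, ?_, ⟨c0, by rw [hD]; ring⟩⟩
  · rw [← map_pow, hw, map_intCast, hD]
  · intro hmem
    rw [IntermediateField.mem_bot] at hmem
    obtain ⟨q, hq⟩ := hmem
    have hint : IsIntegral ℤ (algebraMap (𝓞 K) K w) := w.isIntegral_coe
    rw [← hq] at hint
    have hq' : IsIntegral ℤ q := IsIntegral.tower_bot_of_field hint
    obtain ⟨m, hm⟩ := IsIntegrallyClosed.isIntegral_iff.mp hq'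
    have hwm : w = (m : 𝓞 K) := by
      apply RingOfIntegers.coe_injective
      rw [map_intCast, ← hq, ← hm]
      simp
    have h2 : (2:ℤ) • ω = ((c1 + m : ℤ)) • b 0 := by
      rw [hb0, zsmul_eq_mul, zsmul_eq_mul, mul_one]
      push_cast
      rw [hwdef] at hwm
      linear_combination hwm
    have h3 := congrArg (fun z => b.repr z 1) h2
    simp only [map_smul] at h3
    rw [hω] at h3
    simp [b.repr_self, Finsupp.single_apply] at h3


open NumberField IntermediateField

/-- Let `K` be a real quadratic field of discriminant `D`, `0 < ε ≤ 1/2`,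
and suppose there is an odd prime `p` with Legendre symbol `(D/p) = 1` and
`(1/2)√D ≤ p ≤ (1/2 + ε)√D`. Then `K = ℚ(√D)` has a generator `α` (with primitive
minimal polynomial `a·x² + b·x + c`) with `H(α) ≤ (1/2 + ε)·√D`. -/
theorem real_quadratic_generator_from_prime
    (K : Type*) [Field K] [NumberField K]
    (hdeg : Module.finrank ℚ K = 2)
    (D : ℤ) (hDK : NumberField.discr K = D) (hD : 0 < D)
    (ε : ℝ) (hε0 : 0 < ε) (hε1 : ε ≤ 1 / 2)
    (p : ℕ) (hp : p.Prime) (hodd : Odd p)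
    (hleg : @legendreSym p ⟨hp⟩ D = 1)
    (hp1 : (1 / 2) * Real.sqrt (D : ℝ) ≤ (p : ℝ))
    (hp2 : (p : ℝ) ≤ (1 / 2 + ε) * Real.sqrt (D : ℝ)) :
    ∃ (α : K) (a b c : ℤ), ℚ⟮α⟯ = ⊤ ∧
      (a : K) * α ^ 2 + (b : K) * α + (c : K) = 0 ∧
      Int.gcd (Int.gcd a b) c = 1 ∧
      ((max |a| (max |b| |c|) : ℤ) : ℝ) ≤ (1 / 2 + ε) * Real.sqrt (D : ℝ) := by
  haveI : Fact p.Prime := ⟨hp⟩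
  have hD0 : (0:ℤ) ≤ D := le_of_lt hD
  have hpD : ¬ ((p:ℤ) ∣ D) := by
    intro h
    have h0 : ((D:ℤ) : ZMod p) = 0 := (ZMod.intCast_zmod_eq_zero_iff_dvd D p).mpr h
    have := (legendreSym.eq_zero_iff p D).mpr h0
    rw [hleg] at this
    norm_num at this
  have hDne : ((D:ℤ) : ZMod p) ≠ 0 := fun h => hpD ((ZMod.intCast_zmod_eq_zero_iff_dvd D p).mp h)
  have hsq : IsSquare ((D:ℤ) : ZMod p) := (legendreSym.eq_one_iff p hDne).mp hleg
  obtain ⟨x, hx⟩ := hsq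
  have hD4 : D ≤ 4*(p:ℤ)^2 := by
    have h1 : Real.sqrt (D:ℝ) ≤ 2*(p:ℝ) := by linarith
    have h2 : (D:ℝ) ≤ 4*(p:ℝ)^2 := by
      rw [← Real.sq_sqrt (show (0:ℝ) ≤ (D:ℝ) by exact_mod_cast hD0)]
      have := Real.sqrt_nonneg (D:ℝ)
      nlinarith
    exact_mod_cast h2
  obtain ⟨s, t, hs2, hsnot, ht⟩ := quadratic_discr_sqrt K hdeg
  rw [hDK] at hs2 ht
  obtain ⟨bb, cc, heq, hbabs, hcabs, hgcd⟩ :=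
    exists_bc D p hp hodd t ht x hx.symm hpD hD0 hD4
  have hppos : 0 < p := hp.pos
  have hpK : ((p:ℕ):K) ≠ 0 := Nat.cast_ne_zero.mpr (by omega)
  have h2pK : (2*((p:ℕ):K)) ≠ 0 := mul_ne_zero two_ne_zero hpK
  set α : K := (s - (bb:K)) / (2*((p:ℕ):K)) with hα
  have hbcK : ((bb:K))^2 - 4*((p:ℕ):K)*((cc:K)) = ((D:ℤ):K) := by
    exact_mod_cast congrArg (fun z : ℤ => (z : K)) heq
  have heqK : (((p:ℕ):ℤ):K) * α ^ 2 + (bb:K) * α + (cc:K) = 0 := by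
    push_cast
    rw [hα]
    field_simp
    ring_nf
    ring_nf at hs2 hbcK
    linear_combination hs2 - hbcK
  have hαnot : α ∉ (⊥ : IntermediateField ℚ K) := by
    intro h
    apply hsnot
    have hs' : s = (2*((p:ℕ):K))*α + (bb:K) := by
      rw [hα, mul_div_cancel₀ _ h2pK]
      ring
    rw [hs']
    refine add_mem (mul_mem (mul_mem ?_ ?_) h) ?_
    · exact ofNat_mem _ 2
    · exact IntermediateField.natCast_mem _ p
    · exact IntermediateField.intCast_mem _ bb
  have htop : ℚ⟮α⟯ = ⊤ := by
    have hne : ℚ⟮α⟯ ≠ ⊥ := by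
      rw [Ne, IntermediateField.adjoin_simple_eq_bot_iff]
      exact hαnot
    have hdvd : Module.finrank ℚ ℚ⟮α⟯ ∣ 2 := by
      rw [← hdeg]
      exact ⟨Module.finrank ℚ⟮α⟯ K, (Module.finrank_mul_finrank ℚ ℚ⟮α⟯ K).symm⟩
    have h1 : Module.finrank ℚ ℚ⟮α⟯ ≠ 1 := fun h =>
      hne (IntermediateField.finrank_eq_one_iff.mp h)
    have h2 : Module.finrank ℚ ℚ⟮α⟯ = 2 :=
      ((Nat.dvd_prime Nat.prime_two).mp hdvd).resolve_left h1
    refine IntermediateField.eq_of_le_of_finrank_eq le_top ?_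
    rw [IntermediateField.finrank_top', hdeg, h2]
  refine ⟨α, p, bb, cc, htop, heqK, hgcd, ?_⟩
  have hm : (max |((p:ℕ):ℤ)| (max |bb| |cc|)) = ((p:ℕ):ℤ) := by
    rw [abs_of_nonneg (by positivity)]
    exact max_eq_left (max_le hbabs hcabs)
  rw [hm]
  push_cast
  exact hp2
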